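/- Let H = (V,H) be a boolean representable simplicial complex and τ ⊆ η an equivalence relation on V. Then the lattice of flats of H is isomorphic (as a lattice ordered by inclusion) to the lattice of flats of the quotient complex H/τ, via F ↦ Fφ⁻¹ where φ: V → V/τ is the projection. -/

import Mathlib

open scoped Classical

variable {V : Type}

def IsSC (faces : Set (Finset V)) : Prop :=
  (∀ v : V, ({v} : Finset V) ∈ faces) ∧
    ∀ ⦃X Y : Finset V⦄, X ∈ faces → Y ⊆ X → Y ∈ faces

def IsFlat (faces : Set (Finset V)) (F : Set V) : Prop :=
  ∀ I ∈ faces, (I : Set V) ⊆ F → ∀ p ∉ F, insert p I ∈ faces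

def cl (faces : Set (Finset V)) (X : Set V) : Set V :=
  ⋂₀ {F : Set V | IsFlat faces F ∧ X ⊆ F}

def BRep (faces : Set (Finset V)) : Prop :=
  ∀ X ∈ faces, ∃ (k : ℕ) (F : Fin (k + 1) → Set V) (x : Fin k → V),
    (∀ i, IsFlat faces (F i)) ∧ StrictMono F ∧ Function.Injective x ∧
    (∀ i : Fin k, x i ∈ F i.succ \ F i.castSucc) ∧
    X = Finset.image x Finset.univ

def skel (faces : Set (Finset V)) : SimpleGraph V where
  Adj p q := p ≠ q ∧ ({p, q} : Finset V) ∈ faces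
  symm := by
    constructor
    rintro p q ⟨h1, h2⟩
    exact ⟨h1.symm, by rwa [Finset.pair_comm]⟩
  loopless := by constructor; rintro p ⟨h, _⟩; exact h rfl

def flatGraph (faces : Set (Finset V)) : SimpleGraph V where
  Adj p q := p ≠ q ∧ cl faces {p, q} ≠ Set.univ
  symm := by
    constructor
    rintro p q ⟨h1, h2⟩
    exact ⟨h1.symm, by rwa [Set.pair_comm]⟩
  loopless := by constructor; rintro p ⟨h, _⟩; exact h rfl

def quotFaces (faces : Set (Finset V)) (τ : Setoid V) :
    Set (Finset (Quotient τ)) :=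
  {Y | ∃ X ∈ faces, Y = X.image (Quotient.mk τ)}

lemma my_subset_cl (faces : Set (Finset V)) (X : Set V) : X ⊆ cl faces X := by
  intro a ha F hF; exact hF.2 ha

lemma my_cl_min {faces : Set (Finset V)} {F : Set V} (hF : IsFlat faces F) {X : Set V}
    (h : X ⊆ F) : cl faces X ⊆ F := fun a ha => ha F ⟨hF, h⟩

lemma my_mem_flat {faces : Set (Finset V)} {F : Set V} (hF : IsFlat faces F) {a b : V}
    (hab : cl faces {a} = cl faces {b}) (haF : a ∈ F) : b ∈ F := by
  have h1 : cl faces {b} ⊆ F := hab ▸ my_cl_min hF (by simpa using haF)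
  exact h1 (my_subset_cl faces {b} rfl)

lemma my_empty_mem {faces : Set (Finset V)} [Nonempty V] (hsc : IsSC faces) :
    (∅ : Finset V) ∈ faces := by
  obtain ⟨v⟩ := ‹Nonempty V›
  exact hsc.2 (hsc.1 v) (Finset.empty_subset _)

lemma my_chain_face {faces : Set (Finset V)} [Nonempty V] (hsc : IsSC faces) {k : ℕ}
    (F : Fin (k + 1) → Set V) (hF : ∀ i, IsFlat faces (F i)) (hmono : Monotone F)
    (x : Fin k → V) (hx : ∀ i : Fin k, x i ∈ F i.succ \ F i.castSucc) :
    Finset.image x Finset.univ ∈ faces := by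
  have key : ∀ j : ℕ, j ≤ k →
      (Finset.univ.filter (fun i : Fin k => (i : ℕ) < j)).image x ∈ faces := by
    intro j
    induction j with
    | zero => intro _; simpa using my_empty_mem hsc
    | succ j ih =>
      intro hj
      have hjk : j < k := hj
      have hIj := ih (le_of_lt hjk)
      have hsub : (((Finset.univ.filter (fun i : Fin k => (i : ℕ) < j)).image x : Finset V) : Set V)
          ⊆ F ⟨j, Nat.lt_succ_of_lt hjk⟩ := by
        intro a ha
        simp only [Finset.coe_image, Set.mem_image, Finset.mem_coe, Finset.mem_filter] at ha
        obtain ⟨i, ⟨-, hij⟩, rfl⟩ := ha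
        have h1 : x i ∈ F i.succ := (hx i).1
        have h2 : F i.succ ≤ F ⟨j, Nat.lt_succ_of_lt hjk⟩ := hmono (by
          simp only [Fin.le_def, Fin.val_succ]; omega)
        exact h2 h1
      have hp : x ⟨j, hjk⟩ ∉ F ⟨j, Nat.lt_succ_of_lt hjk⟩ := by
        have h3 := (hx ⟨j, hjk⟩).2
        simpa [Fin.castSucc, Fin.castAdd, Fin.castLE] using h3
      have hins := hF ⟨j, Nat.lt_succ_of_lt hjk⟩ _ hIj hsub _ hp
      have heq : (Finset.univ.filter (fun i : Fin k => (i : ℕ) < j + 1)) =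
          insert (⟨j, hjk⟩ : Fin k) (Finset.univ.filter (fun i : Fin k => (i : ℕ) < j)) := by
        ext i
        simp only [Finset.mem_filter, Finset.mem_univ, true_and, Finset.mem_insert, Fin.ext_iff]
        omega
      rw [heq, Finset.image_insert]
      exact hins
  have h4 := key k le_rfl
  have h5 : (Finset.univ.filter (fun i : Fin k => (i : ℕ) < k)) = Finset.univ := by
    apply Finset.filter_true_of_mem; intro i _; exact i.isLt
  rwa [h5] at h4

lemma my_inj_on_face {faces : Set (Finset V)} (hbr : BRep faces) {X : Finset V}
    (hX : X ∈ faces) : ∀ a ∈ X, ∀ b ∈ X, cl faces {a} = cl faces {b} → a = b := by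
  obtain ⟨k, F, x, hFflat, hFmono, hxinj, hx, rfl⟩ := hbr X hX
  have key : ∀ i j : Fin k, i < j → cl faces {x i} = cl faces {x j} → False := by
    intro i j hij hcl
    have h1 : F i.succ ⊆ F j.castSucc := hFmono.monotone (by
      simp only [Fin.le_def, Fin.val_succ, Fin.coe_castSucc]
      exact hij)
    have hxi : x i ∈ F j.castSucc := h1 (hx i).1
    have hxj : x j ∈ F j.castSucc := my_mem_flat (hFflat _) hcl hxi
    exact (hx j).2 hxj
  intro a ha b hb hab
  simp only [Finset.mem_image, Finset.mem_univ, true_and] at ha hb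
  obtain ⟨i, rfl⟩ := ha; obtain ⟨j, rfl⟩ := hb
  rcases lt_trichotomy i j with h | h | h
  · exact absurd (key i j h hab) (fun c => c)
  · rw [h]
  · exact absurd (key j i h hab.symm) (fun c => c)

lemma my_replace {faces : Set (Finset V)} [Nonempty V] (hsc : IsSC faces) (hbr : BRep faces)
    {X Y : Finset V} (hX : X ∈ faces)
    (h : ∀ a ∈ X, ∃ b ∈ Y, cl faces {b} = cl faces {a})
    (hcard : Y.card ≤ X.card) : Y ∈ faces := by
  obtain ⟨k, F, x, hFflat, hFmono, hxinj, hx, hXeq⟩ := hbr X hX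
  have hxmem : ∀ i : Fin k, x i ∈ X := by
    intro i; rw [hXeq]; exact Finset.mem_image_of_mem _ (Finset.mem_univ i)
  choose y hyY hycl using fun i => h (x i) (hxmem i)
  have hymem : ∀ i, y i ∈ F i.succ \ F i.castSucc := by
    intro i
    constructor
    · exact my_mem_flat (hFflat _) (hycl i).symm (hx i).1
    · intro hcon
      exact (hx i).2 (my_mem_flat (hFflat _) (hycl i) hcon)
  have hface : Finset.image y Finset.univ ∈ faces :=
    my_chain_face hsc F hFflat hFmono.monotone y hymem
  have hyinj : Function.Injective y := by
    intro i j hij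
    apply hxinj
    exact my_inj_on_face hbr hX _ (hxmem i) _ (hxmem j)
      (by rw [← hycl i, ← hycl j, hij])
  have hcardX : X.card = k := by
    rw [hXeq, Finset.card_image_of_injective _ hxinj, Finset.card_univ, Fintype.card_fin]
  have hsub : Finset.image y Finset.univ ⊆ Y := by
    intro b hb
    simp only [Finset.mem_image, Finset.mem_univ, true_and] at hb
    obtain ⟨i, rfl⟩ := hb; exact hyY i
  have hcard3 : Y.card ≤ (Finset.image y Finset.univ).card := by
    rw [Finset.card_image_of_injective _ hyinj, Finset.card_univ, Fintype.card_fin]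
    omega
  have heq : Finset.image y Finset.univ = Y := Finset.eq_of_subset_of_card_le hsub hcard3
  rwa [heq] at hface


lemma my_sat {faces : Set (Finset V)} {τ : Setoid V}
    (hτ : ∀ a b : V, τ.r a b → cl faces {a} = cl faces {b}) {F : Set V}
    (hF : IsFlat faces F) : Quotient.mk τ ⁻¹' (Quotient.mk τ '' F) = F := by
  apply Set.Subset.antisymm
  · rintro a ⟨b, hbF, hba⟩
    exact my_mem_flat hF (hτ b a (Quotient.exact hba)) hbF
  · exact Set.subset_preimage_image _ _

lemma my_image_flat {faces : Set (Finset V)} {τ : Setoid V}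
    (hτ : ∀ a b : V, τ.r a b → cl faces {a} = cl faces {b}) {F : Set V}
    (hF : IsFlat faces F) : IsFlat (quotFaces faces τ) (Quotient.mk τ '' F) := by
  rintro J ⟨X, hXf, rfl⟩ hJsub q hq
  obtain ⟨p, rfl⟩ := Quotient.exists_rep q
  have hXF : (X : Set V) ⊆ F := by
    intro a haX
    have h1 : Quotient.mk τ a ∈ Quotient.mk τ '' F := by
      apply hJsub
      exact Finset.mem_coe.2 (Finset.mem_image_of_mem _ haX)
    rw [← my_sat hτ hF]; exact h1
  have hpF : p ∉ F := fun hc => hq ⟨p, hc, rfl⟩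
  have hins : insert p X ∈ faces := hF X hXf hXF p hpF
  refine Set.mem_setOf.mpr ⟨insert p X, hins, ?_⟩
  ext q
  constructor
  · intro hq'
    rcases (@Finset.mem_insert _ (fun a b => Classical.propDecidable (a = b)) _ _ _).1 hq' with rfl | hq'
    · exact Finset.mem_image_of_mem _ (Finset.mem_insert_self _ _)
    · obtain ⟨a, haX, rfl⟩ := Finset.mem_image.1 hq'
      exact Finset.mem_image_of_mem _ (Finset.mem_insert_of_mem haX)
  · intro hq'
    obtain ⟨a, ha, rfl⟩ := Finset.mem_image.1 hq'
    rcases Finset.mem_insert.1 ha with rfl | ha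
    · exact @Finset.mem_insert_self _ (fun a b => Classical.propDecidable (a = b)) _ _
    · exact @Finset.mem_insert_of_mem _ (fun a b => Classical.propDecidable (a = b)) _ _ _ (Finset.mem_image_of_mem _ ha)

lemma my_preimage_flat {faces : Set (Finset V)} [Nonempty V] (hsc : IsSC faces)
    (hbr : BRep faces) {τ : Setoid V}
    (hτ : ∀ a b : V, τ.r a b → cl faces {a} = cl faces {b}) {G : Set (Quotient τ)}
    (hG : IsFlat (quotFaces faces τ) G) : IsFlat faces (Quotient.mk τ ⁻¹' G) := by
  intro I hI hIsub p hp
  have hpG : Quotient.mk τ p ∉ G := hp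
  obtain ⟨X, hXf, hXeq⟩ := hG _ ⟨I, hI, rfl⟩
    (by
      intro q hq
      obtain ⟨a, haI, rfl⟩ := Finset.mem_image.1 (Finset.mem_coe.1 hq)
      exact hIsub haI) _ hpG
  -- hXeq : insert (mk p) (I.image mk) = X.image mk
  have hinjI : Set.InjOn (Quotient.mk τ) (I : Set V) := fun a ha b hb hab =>
    my_inj_on_face hbr hI a (Finset.mem_coe.1 ha) b (Finset.mem_coe.1 hb)
      (hτ a b (Quotient.exact hab))
  have hcard0 := congrArg Finset.card hXeq
  rw [@Finset.card_insert_of_notMem _ _ _ (fun a b => Classical.propDecidable (a = b)) ?hnot, Finset.card_image_of_injOn hinjI] at hcard0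
  case hnot =>
    intro hc
    obtain ⟨a, haI, ha⟩ := Finset.mem_image.1 hc
    exact hp (by
      show Quotient.mk τ p ∈ G
      rw [← ha]
      exact hIsub haI)
  -- hcard0 : I.card + 1 = (X.image mk).card
  have h4 : (X.image (Quotient.mk τ)).card ≤ X.card := Finset.card_image_le
  have h5 : (insert p I).card ≤ I.card + 1 := Finset.card_insert_le _ _
  have hcard : (insert p I).card ≤ X.card := by omega
  apply my_replace hsc hbr hXf _ hcard
  intro a haX
  have h1 : Quotient.mk τ a ∈ Finset.image (Quotient.mk τ) X :=
    Finset.mem_image_of_mem _ haX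
  rw [← hXeq] at h1
  rcases (@Finset.mem_insert _ (fun a b => Classical.propDecidable (a = b)) _ _ _).1 h1 with h2 | h2
  · exact ⟨p, Finset.mem_insert_self _ _, hτ p a (Quotient.exact h2.symm)⟩
  · obtain ⟨b, hbI, hba⟩ := Finset.mem_image.1 h2
    exact ⟨b, Finset.mem_insert_of_mem hbI, hτ b a (Quotient.exact hba)⟩

theorem flat_lattices_iso [Fintype V] [Nonempty V]
    {faces : Set (Finset V)} (hsc : IsSC faces) (hbr : BRep faces)
    (τ : Setoid V) (hτ : ∀ a b : V, τ.r a b → cl faces {a} = cl faces {b}) :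
    ∃ e : {G : Set (Quotient τ) // IsFlat (quotFaces faces τ) G} ≃o
        {F : Set V // IsFlat faces F},
      ∀ G : {G : Set (Quotient τ) // IsFlat (quotFaces faces τ) G},
        (e G : Set V) = Quotient.mk τ ⁻¹' (G : Set (Quotient τ)) := by
  refine ⟨{
    toFun := fun G => ⟨Quotient.mk τ ⁻¹' G.1, my_preimage_flat hsc hbr hτ G.2⟩
    invFun := fun F => ⟨Quotient.mk τ '' F.1, my_image_flat hτ F.2⟩
    left_inv := ?_
    right_inv := ?_
    map_rel_iff' := ?_ }, fun G => rfl⟩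
  · rintro ⟨G, hG⟩
    apply Subtype.ext
    exact Set.image_preimage_eq G (fun q => Quotient.exists_rep q)
  · rintro ⟨F, hF⟩
    apply Subtype.ext
    exact my_sat hτ hF
  · intro G₁ G₂
    show Quotient.mk τ ⁻¹' G₁.1 ⊆ Quotient.mk τ ⁻¹' G₂.1 ↔ G₁.1 ⊆ G₂.1
    constructor
    · intro h q hq
      obtain ⟨p, rfl⟩ := Quotient.exists_rep q
      exact h hq
    · intro h a ha
      exact h ha
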